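/- arXiv:1704.02077 — 3 statements merged into one kernel-verified Lean document; each statement's English description precedes it below -/
import Mathlib

section
/- Let L ∈ ℝ^{N×N} be symmetric positive semidefinite with L𝟙 = 0 and with one-dimensional kernel spanned by 𝟙, let λ₂ > 0 be its smallest nonzero eigenvalue, and let S ∈ ℝ^{n×n} be symmetric negative semidefinite. Then for every ξ ∈ ℝ^{Nn} satisfying (𝟙ᵀ ⊗ I_n)ξ = 0, one has ξᵀ(L ⊗ S)ξ ≤ λ₂ ξᵀ(I_N ⊗ S)ξ. -/
open Matrix Kronecker

private lemma courant_aux (N : ℕ) (L : Matrix (Fin N) (Fin N) ℝ) (hLpsd : L.PosSemidef)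
    (hker : ∀ x : Fin N → ℝ, L.mulVec x = 0 ↔ ∃ c : ℝ, x = fun _ => c)
    (lam2 : ℝ)
    (hlam2 : IsLeast {t : ℝ | t ≠ 0 ∧ ∃ v : Fin N → ℝ, v ≠ 0 ∧ L.mulVec v = t • v} lam2)
    (x : Fin N → ℝ) (hx : ∑ i, x i = 0) :
    lam2 * (x ⬝ᵥ x) ≤ x ⬝ᵥ L.mulVec x := by
  classical
  have hH := hLpsd.1
  set V : Matrix (Fin N) (Fin N) ℝ := (hH.eigenvectorUnitary : Matrix (Fin N) (Fin N) ℝ) with hV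
  set μ := hH.eigenvalues with hμ
  set w : Fin N → ℝ := Vᵀ *ᵥ x with hw
  have hstar : star V = Vᵀ := by
    ext i j; simp [Matrix.star_apply]
  have hunit : V * Vᵀ = 1 := by
    rw [← hstar]; exact (Matrix.mem_unitaryGroup_iff).mp hH.eigenvectorUnitary.2
  have hxx : x ⬝ᵥ x = ∑ i, (w i)^2 := by
    have h1 : w ⬝ᵥ w = x ⬝ᵥ x := by
      rw [hw, dotProduct_mulVec, vecMul_transpose, mulVec_mulVec, hunit, one_mulVec]
    rw [← h1]; simp [dotProduct, sq]
  have hxLx : x ⬝ᵥ L.mulVec x = ∑ i, μ i * (w i)^2 := by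
    conv_lhs => rw [hH.spectral_theorem, Unitary.conjStarAlgAut_apply, hstar]
    rw [← mulVec_mulVec, ← mulVec_mulVec, dotProduct_mulVec, ← mulVec_transpose, ← hw]
    simp [dotProduct, mulVec_diagonal, sq]
    exact Finset.sum_congr rfl fun i _ => by ring
  have key : ∀ i, lam2 * (w i)^2 ≤ μ i * (w i)^2 := by
    intro i
    rcases eq_or_ne (μ i) 0 with h0 | h0
    · have heig := hH.mulVec_eigenvectorBasis i
      rw [← hμ, h0, zero_smul] at heig
      obtain ⟨c, hc⟩ := (hker _).mp heig
      have hVc : ∀ j, V j i = c := by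
        intro j
        have := congrFun hc j
        simpa [hV, Matrix.IsHermitian.eigenvectorUnitary_apply] using this
      have hwi : w i = 0 := by
        have : w i = ∑ j, V j i * x j := by
          simp [hw, mulVec, dotProduct, transpose_apply]
        rw [this]
        simp only [hVc, ← Finset.mul_sum, hx, mul_zero]
      rw [hwi]
      simp
    · have : lam2 ≤ μ i := by
        apply hlam2.2
        exact ⟨h0, ⇑(hH.eigenvectorBasis i), by simpa using hH.eigenvectorBasis.orthonormal.ne_zero i,
          hH.mulVec_eigenvectorBasis i⟩
      nlinarith [sq_nonneg (w i)]
  rw [hxx, hxLx, Finset.mul_sum]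
  exact Finset.sum_le_sum fun i _ => key i

private lemma kron_quad_aux (N n : ℕ) (A : Matrix (Fin N) (Fin N) ℝ)
    (M : Matrix (Fin n) (Fin n) ℝ) (ξ : Fin N × Fin n → ℝ) :
    ξ ⬝ᵥ (A ⊗ₖ M).mulVec ξ =
      ∑ i, ∑ i', A i i' * ((fun j => ξ (i, j)) ⬝ᵥ M.mulVec (fun j => ξ (i', j))) := by
  simp only [dotProduct, mulVec, kroneckerMap_apply, Fintype.sum_prod_type,
    Finset.mul_sum, Finset.sum_mul]
  refine Finset.sum_congr rfl fun i _ => ?_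
  rw [Finset.sum_comm]
  refine Finset.sum_congr rfl fun i' _ => ?_
  refine Finset.sum_congr rfl fun j _ => ?_
  refine Finset.sum_congr rfl fun j' _ => ?_
  ring

private lemma kron_quad_gram_aux (N n : ℕ) (A : Matrix (Fin N) (Fin N) ℝ)
    (B : Matrix (Fin n) (Fin n) ℝ) (ξ : Fin N × Fin n → ℝ) :
    ξ ⬝ᵥ (A ⊗ₖ (Bᵀ * B)).mulVec ξ =
      ∑ k, (fun i => B.mulVec (fun j => ξ (i, j)) k) ⬝ᵥ
        A.mulVec (fun i => B.mulVec (fun j => ξ (i, j)) k) := by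
  rw [kron_quad_aux]
  have inner_q : ∀ i i' : Fin N,
      (fun j => ξ (i, j)) ⬝ᵥ (Bᵀ * B).mulVec (fun j => ξ (i', j)) =
        ∑ k, B.mulVec (fun j => ξ (i, j)) k * B.mulVec (fun j => ξ (i', j)) k := by
    intro i i'
    rw [← mulVec_mulVec _ Bᵀ B, dotProduct_mulVec, vecMul_transpose]
    rfl
  simp only [inner_q]
  have hA : ∀ (v : Fin N → ℝ) (i : Fin N), (A *ᵥ v) i = ∑ i', A i i' * v i' := fun v i => rfl
  simp only [dotProduct, hA, Finset.mul_sum, Finset.sum_mul]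
  symm
  refine Finset.sum_comm.trans ?_
  refine Finset.sum_congr rfl fun i _ => Finset.sum_comm.trans ?_
  refine Finset.sum_congr rfl fun i' _ => Finset.sum_congr rfl fun k _ => ?_
  ring

/-- If `L` is symmetric PSD with `L𝟙 = 0` and kernel exactly the span
of `𝟙`, `λ₂ > 0` is its smallest nonzero eigenvalue, and `S` is symmetric negative
semidefinite, then for every `ξ ∈ ℝ^{Nn}` with `(𝟙ᵀ ⊗ I_n)ξ = 0` one has
`ξᵀ(L ⊗ S)ξ ≤ λ₂ ξᵀ(I_N ⊗ S)ξ`. -/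
theorem kron_quadratic_upper_bound_negsemidef
    (N n : ℕ)
    (L : Matrix (Fin N) (Fin N) ℝ) (hLpsd : L.PosSemidef)
    (hL1 : L.mulVec (fun _ => 1) = 0)
    (hker : ∀ x : Fin N → ℝ, L.mulVec x = 0 ↔ ∃ c : ℝ, x = fun _ => c)
    (lam2 : ℝ) (hlam2pos : 0 < lam2)
    (hlam2 : IsLeast {t : ℝ | t ≠ 0 ∧ ∃ v : Fin N → ℝ, v ≠ 0 ∧ L.mulVec v = t • v} lam2)
    (S : Matrix (Fin n) (Fin n) ℝ) (hS : (-S).PosSemidef)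
    (ξ : Fin N × Fin n → ℝ)
    (hξ : (Matrix.of (fun (_ : Fin 1) (_ : Fin N) => (1:ℝ)) ⊗ₖ
            (1 : Matrix (Fin n) (Fin n) ℝ)).mulVec ξ = 0) :
    ξ ⬝ᵥ (L ⊗ₖ S).mulVec ξ ≤ lam2 * (ξ ⬝ᵥ ((1 : Matrix (Fin N) (Fin N) ℝ) ⊗ₖ S).mulVec ξ) := by
  classical
  open scoped MatrixOrder in
  obtain ⟨B, hB⟩ := CStarAlgebra.nonneg_iff_eq_star_mul_self.mp hS.nonneg
  have hB' : -S = Bᵀ * B := by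
    rw [hB, star_eq_conjTranspose, conjTranspose_eq_transpose_of_trivial]
  -- column sums of ξ vanish
  have hsum : ∀ j : Fin n, ∑ i, ξ (i, j) = 0 := by
    intro j
    have := congrFun hξ (0, j)
    simpa [mulVec, dotProduct, kroneckerMap_apply, Fintype.sum_prod_type, one_apply,
      Finset.mul_sum, Finset.sum_ite_eq'] using this
  set y : Fin n → Fin N → ℝ := fun k i => B.mulVec (fun j => ξ (i, j)) k with hy
  have hysum : ∀ k, ∑ i, y k i = 0 := by
    intro k
    simp only [hy, mulVec, dotProduct]
    rw [Finset.sum_comm]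
    simp only [← Finset.mul_sum, hsum, mul_zero, Finset.sum_const_zero]
  -- negation identities
  have hnegL : ξ ⬝ᵥ (L ⊗ₖ S).mulVec ξ = -(ξ ⬝ᵥ (L ⊗ₖ (Bᵀ * B)).mulVec ξ) := by
    rw [← hB']
    have : L ⊗ₖ (-S) = -(L ⊗ₖ S) := by ext ⟨i, j⟩ ⟨i', j'⟩; simp [kroneckerMap_apply]
    rw [this, neg_mulVec, dotProduct_neg, neg_neg]
  have hnegI : ξ ⬝ᵥ ((1 : Matrix (Fin N) (Fin N) ℝ) ⊗ₖ S).mulVec ξ =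
      -(ξ ⬝ᵥ ((1 : Matrix (Fin N) (Fin N) ℝ) ⊗ₖ (Bᵀ * B)).mulVec ξ) := by
    rw [← hB']
    have : (1 : Matrix (Fin N) (Fin N) ℝ) ⊗ₖ (-S) = -((1 : Matrix (Fin N) (Fin N) ℝ) ⊗ₖ S) := by
      ext ⟨i, j⟩ ⟨i', j'⟩; simp [kroneckerMap_apply]
    rw [this, neg_mulVec, dotProduct_neg, neg_neg]
  rw [hnegL, hnegI, kron_quad_gram_aux, kron_quad_gram_aux]
  have hId : ∀ k, (fun i => y k i) ⬝ᵥ (1 : Matrix (Fin N) (Fin N) ℝ).mulVec (fun i => y k i)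
      = (y k) ⬝ᵥ (y k) := by intro k; rw [one_mulVec]
  have hkey : lam2 * ∑ k, (fun i => y k i) ⬝ᵥ
      (1 : Matrix (Fin N) (Fin N) ℝ).mulVec (fun i => y k i)
      ≤ ∑ k, (fun i => y k i) ⬝ᵥ L.mulVec (fun i => y k i) := by
    rw [Finset.mul_sum]
    refine Finset.sum_le_sum fun k _ => ?_
    rw [hId k]
    exact courant_aux N L hLpsd hker lam2 hlam2 (y k) (hysum k)
  linarith
end

section
/- Let A ∈ ℝ^{n×n}, B ∈ ℝ^{n×p}, and let P, Q ∈ ℝ^{n×n} be symmetric positive definite matrices satisfying the algebraic Riccati equation PA + AᵀP − PBBᵀP + Q = 0. Then the matrix A − BBᵀP is Hurwitz: every (complex) eigenvalue of A − BBᵀP has strictly negative real part. -/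
open Matrix

/-- A real square matrix is Hurwitz if every complex eigenvalue (root of its
characteristic polynomial over ℂ) has strictly negative real part. -/
def IsHurwitz {n : ℕ} (M : Matrix (Fin n) (Fin n) ℝ) : Prop :=
  ∀ μ : ℂ, (M.map (Complex.ofReal ·)).charpoly.IsRoot μ → μ.re < 0

noncomputable section

/-- complexification of a real matrix -/
private def cx {n m : ℕ} (M : Matrix (Fin n) (Fin m) ℝ) : Matrix (Fin n) (Fin m) ℂ :=
  M.map (Complex.ofReal ·)

private lemma cx_mul {n m k : ℕ} (M : Matrix (Fin n) (Fin m) ℝ) (N : Matrix (Fin m) (Fin k) ℝ) :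
    cx (M * N) = cx M * cx N :=
  Matrix.map_mul (f := Complex.ofRealHom)

private lemma cx_transpose {n m : ℕ} (M : Matrix (Fin n) (Fin m) ℝ) :
    cx Mᵀ = (cx M)ᵀ := rfl

private lemma cx_conjTranspose {n m : ℕ} (M : Matrix (Fin n) (Fin m) ℝ) :
    (cx M)ᴴ = cx Mᵀ := by
  ext i j
  simp [cx, Matrix.conjTranspose_apply, Matrix.map_apply]

/-- real matrices commute with star on vectors -/
private lemma cx_mulVec_star {n m : ℕ} (M : Matrix (Fin n) (Fin m) ℝ) (v : Fin m → ℂ) :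
    star (cx M *ᵥ v) = cx M *ᵥ star v := by
  rw [star_mulVec, cx_conjTranspose, cx_transpose, vecMul_transpose]

private lemma re_star_dot_self {m : ℕ} (w : Fin m → ℂ) : 0 ≤ (star w ⬝ᵥ w).re := by
  simp only [dotProduct, Pi.star_apply, Complex.re_sum, Complex.star_def]
  refine Finset.sum_nonneg fun i _ => ?_
  rw [mul_comm, Complex.mul_conj]
  simpa using Complex.normSq_nonneg (w i)

private lemma re_quad_eq {n : ℕ} (M : Matrix (Fin n) (Fin n) ℝ) (v : Fin n → ℂ) :
    (star v ⬝ᵥ cx M *ᵥ v).re =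
      (fun i => (v i).re) ⬝ᵥ (M *ᵥ fun i => (v i).re) +
      (fun i => (v i).im) ⬝ᵥ (M *ᵥ fun i => (v i).im) := by
  simp only [dotProduct, mulVec, Pi.star_apply, Complex.re_sum, cx, Matrix.map_apply,
    Complex.mul_re, Complex.star_def, Complex.conj_re, Complex.conj_im, Complex.re_sum,
    Complex.im_sum, Complex.re_ofReal_mul, Complex.im_ofReal_mul, Complex.ofReal_re,
    Complex.ofReal_im, ← Finset.sum_add_distrib]
  refine Finset.sum_congr rfl fun i _ => ?_
  simp only [zero_mul, sub_zero, neg_mul, sub_neg_eq_add, Finset.mul_sum,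
    ← Finset.sum_add_distrib]
  rw [← Finset.sum_sub_distrib]
  exact Finset.sum_congr rfl fun j _ => by ring

private lemma re_quad_pos {n : ℕ} {M : Matrix (Fin n) (Fin n) ℝ} (hM : M.PosDef)
    {v : Fin n → ℂ} (hv : v ≠ 0) : 0 < (star v ⬝ᵥ cx M *ᵥ v).re := by
  rw [re_quad_eq]
  set x : Fin n → ℝ := fun i => (v i).re with hx
  set y : Fin n → ℝ := fun i => (v i).im with hy
  have hxy : x ≠ 0 ∨ y ≠ 0 := by
    by_contra h
    push_neg at h
    apply hv
    funext i
    have h1 := congrFun h.1 i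
    have h2 := congrFun h.2 i
    simp [hx, hy] at h1 h2
    exact Complex.ext h1 h2
  have hsx : 0 ≤ x ⬝ᵥ (M *ᵥ x) := by simpa using hM.posSemidef.dotProduct_mulVec_nonneg x
  have hsy : 0 ≤ y ⬝ᵥ (M *ᵥ y) := by simpa using hM.posSemidef.dotProduct_mulVec_nonneg y
  rcases hxy with h | h
  · have := hM.dotProduct_mulVec_pos h
    simp only [star_trivial] at this
    linarith
  · have := hM.dotProduct_mulVec_pos h
    simp only [star_trivial] at this
    linarith

private lemma cx_add {n m : ℕ} (M N : Matrix (Fin n) (Fin m) ℝ) :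
    cx (M + N) = cx M + cx N := by
  ext i j; simp [cx]

private lemma cx_neg {n m : ℕ} (M : Matrix (Fin n) (Fin m) ℝ) :
    cx (-M) = -cx M := by
  ext i j; simp [cx]

private lemma eigvec_of_root {n : ℕ} (M : Matrix (Fin n) (Fin n) ℂ) {μ : ℂ}
    (h : M.charpoly.IsRoot μ) : ∃ v ≠ 0, M *ᵥ v = μ • v := by
  have hdet : (Matrix.diagonal (fun _ : Fin n => μ) - M).det = 0 := by
    have h' : Polynomial.eval μ M.charpoly = 0 := h
    rw [Matrix.charpoly, ← Polynomial.coe_evalRingHom, RingHom.map_det] at h'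
    rw [← h']
    congr 1
    ext i j
    by_cases hij : i = j <;>
      simp [hij, Matrix.charmatrix_apply, Matrix.diagonal, Matrix.sub_apply]
  obtain ⟨v, hv, hmv⟩ := Matrix.exists_mulVec_eq_zero_iff.mpr hdet
  refine ⟨v, hv, ?_⟩
  rw [Matrix.sub_mulVec, sub_eq_zero] at hmv
  rw [← hmv]
  funext i
  simp [Matrix.mulVec_diagonal]

end

/-- If `P, Q` are symmetric positive definite and satisfy the
algebraic Riccati equation `PA + AᵀP − PBBᵀP + Q = 0`, then `A − BBᵀP` is Hurwitz. -/
theorem riccati_implies_hurwitz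
    (n p : ℕ)
    (A : Matrix (Fin n) (Fin n) ℝ) (B : Matrix (Fin n) (Fin p) ℝ)
    (P Q : Matrix (Fin n) (Fin n) ℝ)
    (hP : P.PosDef) (hQ : Q.PosDef)
    (hARE : P * A + Aᵀ * P - P * B * Bᵀ * P + Q = 0) :
    IsHurwitz (A - B * Bᵀ * P) := by
  intro μ hroot
  set K : Matrix (Fin n) (Fin n) ℝ := A - B * Bᵀ * P with hKdef
  set N : Matrix (Fin p) (Fin n) ℝ := Bᵀ * P with hNdef
  have hPt : Pᵀ = P :=
    (Matrix.conjTranspose_eq_transpose_of_trivial P).symm.trans hP.1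
  have hKt : Kᵀ = Aᵀ - P * (B * Bᵀ) := by
    simp [hKdef, Matrix.transpose_sub, Matrix.transpose_mul, hPt, Matrix.mul_assoc]
  have hQ' : Q = -(P * A + Aᵀ * P - P * B * Bᵀ * P) := eq_neg_of_add_eq_zero_right hARE
  have hKey : P * K + Kᵀ * P = -(Q + Nᵀ * N) := by
    rw [hKt, hQ', hKdef, hNdef, Matrix.transpose_mul, Matrix.transpose_transpose, hPt]
    noncomm_ring
    simp only [Matrix.mul_assoc]
    abel
  have hKeyC : cx P * cx K + (cx K)ᵀ * cx P = -(cx Q + (cx N)ᵀ * cx N) := by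
    simp only [← cx_transpose, ← cx_mul, ← cx_add, ← cx_neg]
    exact congrArg cx hKey
  obtain ⟨v, hv, hKv⟩ := eigvec_of_root (cx K) hroot
  set c : ℂ := star v ⬝ᵥ (cx P *ᵥ v) with hc
  have happ := congrArg (fun M : Matrix (Fin n) (Fin n) ℂ => star v ⬝ᵥ (M *ᵥ v)) hKeyC
  simp only [Matrix.add_mulVec, dotProduct_add, Matrix.neg_mulVec, dotProduct_neg] at happ
  have hterm1 : star v ⬝ᵥ ((cx P * cx K) *ᵥ v) = μ * c := by
    rw [← Matrix.mulVec_mulVec, hKv, Matrix.mulVec_smul, dotProduct_smul, smul_eq_mul]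
  have hterm2 : star v ⬝ᵥ (((cx K)ᵀ * cx P) *ᵥ v) = (starRingEnd ℂ) μ * c := by
    rw [← Matrix.mulVec_mulVec, Matrix.dotProduct_mulVec, Matrix.vecMul_transpose,
      ← cx_mulVec_star, hKv, star_smul, smul_dotProduct, Complex.star_def, smul_eq_mul]
  have hterm3 : star v ⬝ᵥ (((cx N)ᵀ * cx N) *ᵥ v) = star (cx N *ᵥ v) ⬝ᵥ (cx N *ᵥ v) := by
    rw [← Matrix.mulVec_mulVec, Matrix.dotProduct_mulVec, Matrix.vecMul_transpose,
      ← cx_mulVec_star]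
  have hmu : μ * c + (starRingEnd ℂ) μ * c = ((2 * μ.re : ℝ) : ℂ) * c := by
    rw [← add_mul, Complex.add_conj]
  rw [hterm1, hterm2, hterm3, hmu] at happ
  have hre := congrArg Complex.re happ
  simp only [Complex.re_ofReal_mul, Complex.neg_re, Complex.add_re] at hre
  have h1 : 0 < ((star v) ⬝ᵥ (cx Q *ᵥ v)).re := re_quad_pos hQ hv
  have h2 : 0 ≤ (star (cx N *ᵥ v) ⬝ᵥ (cx N *ᵥ v)).re := re_star_dot_self _
  have h3 : 0 < c.re := re_quad_pos hP hv
  nlinarith [mul_nonneg (le_of_lt h3) (le_of_lt h3)]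
end

section
/- Under the stated assumptions (Lipschitz-type nonlinearity), let P₂, Q₂ be symmetric positive definite with P₂A + AᵀP₂ − P₂BBᵀP₂ + Q₂ = 0, K₂ = −BᵀP₂, μ ≥ γ, ν > 0. Let xᵢ, rᵢ, pᵢ : [0,∞) → ℝⁿ be such that the tracking error x̃ᵢ = xᵢ − pᵢ satisfies the closed-loop error dynamics ẋ̃ᵢ = (A + BK₂)x̃ᵢ + B( f(xᵢ,t) − f(rᵢ,t) ) + μ φᵢ B h(K₂x̃ᵢ), where φᵢ = ‖xᵢ − rᵢ‖ + ν. Then V(t) = x̃ᵢ(t)ᵀP₂x̃ᵢ(t) satisfies V(t) ≤ V(0) e^{−η₂ t} with η₂ = λ_min(Q₂)/λ_max(P₂); in particular x̃ᵢ(t) → 0 exponentially as t → ∞. -/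
open Matrix Filter Topology

/-- Matrix–vector multiplication as a map on Euclidean space. -/
noncomputable def mv {m k : ℕ} (M : Matrix (Fin m) (Fin k) ℝ)
    (v : EuclideanSpace ℝ (Fin k)) : EuclideanSpace ℝ (Fin m) := WithLp.toLp 2 (M.mulVec v)

/-- The normalization function `h(z) = z/‖z‖` for `z ≠ 0`, `h(0) = 0`
(note `(0:ℝ)⁻¹ = 0` in Lean, so this single formula covers both cases). -/
noncomputable def sgn {q : ℕ} (z : EuclideanSpace ℝ (Fin q)) : EuclideanSpace ℝ (Fin q) :=
  ‖z‖⁻¹ • z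

open scoped RealInnerProductSpace

lemma inner_eq_dot {k : ℕ} (a b : EuclideanSpace ℝ (Fin k)) :
    ⟪a, b⟫ = (a : Fin k → ℝ) ⬝ᵥ (b : Fin k → ℝ) := by
  simp [PiLp.inner_apply, dotProduct, RCLike.inner_apply, mul_comm]

lemma norm_sq_eq_dot {k : ℕ} (a : EuclideanSpace ℝ (Fin k)) :
    ‖a‖ ^ 2 = (a : Fin k → ℝ) ⬝ᵥ (a : Fin k → ℝ) := by
  rw [← inner_eq_dot, real_inner_self_eq_norm_sq]

lemma quad_lower {n : ℕ} {M : Matrix (Fin n) (Fin n) ℝ} (hM : M.IsHermitian)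
    {c : ℝ} (hc : ∀ i, c ≤ hM.eigenvalues i) (v : EuclideanSpace ℝ (Fin n)) :
    c * ‖v‖ ^ 2 ≤ (v : Fin n → ℝ) ⬝ᵥ M.mulVec v := by
  set b := hM.eigenvectorBasis with hbdef
  have ht : Mᵀ = M := by
    have := hM.eq; rwa [conjTranspose_eq_transpose_of_trivial] at this
  have key : ∀ i, ⟪b i, (mv M v : EuclideanSpace ℝ (Fin n))⟫
      = hM.eigenvalues i * ⟪b i, v⟫ := by
    intro i
    have hb : M *ᵥ (b i) = hM.eigenvalues i • (b i : Fin n → ℝ) :=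
      hM.mulVec_eigenvectorBasis i
    rw [inner_eq_dot, inner_eq_dot]
    show (b i : Fin n → ℝ) ⬝ᵥ (M *ᵥ v) = hM.eigenvalues i * ((b i : Fin n → ℝ) ⬝ᵥ v)
    rw [dotProduct_mulVec, ← mulVec_transpose, ht, hb, smul_dotProduct, smul_eq_mul]
  have h1 : (v : Fin n → ℝ) ⬝ᵥ M.mulVec v
      = ∑ i, hM.eigenvalues i * (⟪b i, v⟫ * ⟪b i, v⟫) := by
    have e1 : (v : Fin n → ℝ) ⬝ᵥ M.mulVec v = ⟪v, (mv M v : EuclideanSpace ℝ (Fin n))⟫ :=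
      (inner_eq_dot v (mv M v)).symm
    rw [e1, ← b.sum_inner_mul_inner v (mv M v)]
    refine Finset.sum_congr rfl fun i _ => ?_
    rw [key i, real_inner_comm v (b i)]; ring
  have h2 : ‖v‖ ^ 2 = ∑ i, ⟪b i, v⟫ * ⟪b i, v⟫ := by
    rw [← real_inner_self_eq_norm_sq, ← b.sum_inner_mul_inner v v]
    refine Finset.sum_congr rfl fun i _ => ?_
    rw [real_inner_comm v (b i)]
  rw [h1, h2, Finset.mul_sum]
  exact Finset.sum_le_sum fun i _ =>
    mul_le_mul_of_nonneg_right (hc i) (mul_self_nonneg _)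

lemma quad_upper {n : ℕ} {M : Matrix (Fin n) (Fin n) ℝ} (hM : M.IsHermitian)
    {c : ℝ} (hc : ∀ i, hM.eigenvalues i ≤ c) (v : EuclideanSpace ℝ (Fin n)) :
    (v : Fin n → ℝ) ⬝ᵥ M.mulVec v ≤ c * ‖v‖ ^ 2 := by
  set b := hM.eigenvectorBasis with hbdef
  have ht : Mᵀ = M := by
    have := hM.eq; rwa [conjTranspose_eq_transpose_of_trivial] at this
  have key : ∀ i, ⟪b i, (mv M v : EuclideanSpace ℝ (Fin n))⟫
      = hM.eigenvalues i * ⟪b i, v⟫ := by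
    intro i
    have hb : M *ᵥ (b i) = hM.eigenvalues i • (b i : Fin n → ℝ) :=
      hM.mulVec_eigenvectorBasis i
    rw [inner_eq_dot, inner_eq_dot]
    show (b i : Fin n → ℝ) ⬝ᵥ (M *ᵥ v) = hM.eigenvalues i * ((b i : Fin n → ℝ) ⬝ᵥ v)
    rw [dotProduct_mulVec, ← mulVec_transpose, ht, hb, smul_dotProduct, smul_eq_mul]
  have h1 : (v : Fin n → ℝ) ⬝ᵥ M.mulVec v
      = ∑ i, hM.eigenvalues i * (⟪b i, v⟫ * ⟪b i, v⟫) := by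
    have e1 : (v : Fin n → ℝ) ⬝ᵥ M.mulVec v = ⟪v, (mv M v : EuclideanSpace ℝ (Fin n))⟫ :=
      (inner_eq_dot v (mv M v)).symm
    rw [e1, ← b.sum_inner_mul_inner v (mv M v)]
    refine Finset.sum_congr rfl fun i _ => ?_
    rw [key i, real_inner_comm v (b i)]; ring
  have h2 : ‖v‖ ^ 2 = ∑ i, ⟪b i, v⟫ * ⟪b i, v⟫ := by
    rw [← real_inner_self_eq_norm_sq, ← b.sum_inner_mul_inner v v]
    refine Finset.sum_congr rfl fun i _ => ?_
    rw [real_inner_comm v (b i)]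
  rw [h1, h2, Finset.mul_sum]
  exact Finset.sum_le_sum fun i _ =>
    mul_le_mul_of_nonneg_right (hc i) (mul_self_nonneg _)

lemma eig_mem {n : ℕ} {M : Matrix (Fin n) (Fin n) ℝ} (hM : M.IsHermitian) (i : Fin n) :
    hM.eigenvalues i ∈ {t : ℝ | ∃ v : Fin n → ℝ, v ≠ 0 ∧ M.mulVec v = t • v} := by
  refine ⟨hM.eigenvectorBasis i, ?_, hM.mulVec_eigenvectorBasis i⟩
  intro h
  exact hM.eigenvectorBasis.orthonormal.ne_zero i (by simpa using congrArg (WithLp.toLp 2) h)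

lemma eig_set_pos {n : ℕ} {M : Matrix (Fin n) (Fin n) ℝ} (hM : M.PosDef) {t : ℝ}
    (h : t ∈ {t : ℝ | ∃ v : Fin n → ℝ, v ≠ 0 ∧ M.mulVec v = t • v}) : 0 < t := by
  obtain ⟨v, hv, hMv⟩ := h
  have h1 : 0 < v ⬝ᵥ M.mulVec v := by
    have := hM.dotProduct_mulVec_pos hv
    simpa using this
  rw [hMv, dotProduct_smul, smul_eq_mul] at h1
  have h2 : 0 < v ⬝ᵥ v := by
    have hnn : 0 ≤ v ⬝ᵥ v := Finset.sum_nonneg fun i _ => mul_self_nonneg _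
    have hne : v ⬝ᵥ v ≠ 0 := fun h' => hv (dotProduct_self_eq_zero.mp h')
    exact lt_of_le_of_ne hnn (Ne.symm hne)
  nlinarith

set_option maxHeartbeats 1000000 in
/-- Under the Lipschitz-type condition on `f`, with `P₂, Q₂` symmetric
positive definite solving the Riccati equation, `K₂ = −BᵀP₂`, `μ ≥ γ`, `ν > 0`, every
tracking error `x̃ = x − p` obeying
`ẋ̃ = (A+BK₂)x̃ + B(f(x,t) − f(r,t)) + μφ B h(K₂x̃)` with `φ = ‖x − r‖ + ν` satisfies
`V(t) = x̃(t)ᵀP₂x̃(t) ≤ V(0) e^{−η₂ t}` with `η₂ = λ_min(Q₂)/λ_max(P₂)`; in particular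
`x̃(t) → 0` exponentially. -/
theorem tracking_error_exponential_decay
    (n p : ℕ)
    (A : Matrix (Fin n) (Fin n) ℝ) (B : Matrix (Fin n) (Fin p) ℝ)
    (γ : ℝ) (hγ : 0 < γ)
    (f : EuclideanSpace ℝ (Fin n) → ℝ → EuclideanSpace ℝ (Fin p))
    (hf : ∀ θ₁ θ₂ : EuclideanSpace ℝ (Fin n), ∀ t : ℝ, 0 ≤ t →
      ‖f θ₁ t - f θ₂ t‖ ≤ γ * ‖θ₁ - θ₂‖)
    (hf0 : ∀ t : ℝ, 0 ≤ t → f 0 t = 0)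
    (P₂ Q₂ : Matrix (Fin n) (Fin n) ℝ) (hP₂ : P₂.PosDef) (hQ₂ : Q₂.PosDef)
    (hARE₂ : P₂ * A + Aᵀ * P₂ - P₂ * B * Bᵀ * P₂ + Q₂ = 0)
    (K₂ : Matrix (Fin p) (Fin n) ℝ) (hK₂ : K₂ = -(Bᵀ * P₂))
    (μ ν : ℝ) (hμ : γ ≤ μ) (hν : 0 < ν)
    (lminQ₂ lmaxP₂ η₂ : ℝ)
    (hlminQ₂ : IsLeast {t : ℝ | ∃ v : Fin n → ℝ, v ≠ 0 ∧ Q₂.mulVec v = t • v} lminQ₂)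
    (hlmaxP₂ : IsGreatest {t : ℝ | ∃ v : Fin n → ℝ, v ≠ 0 ∧ P₂.mulVec v = t • v} lmaxP₂)
    (hη₂ : η₂ = lminQ₂ / lmaxP₂)
    (x r pf : ℝ → EuclideanSpace ℝ (Fin n))
    (hdyn : ∀ t : ℝ, 0 ≤ t →
      HasDerivAt (fun τ => x τ - pf τ)
        (mv (A + B * K₂) (x t - pf t) + mv B (f (x t) t - f (r t) t) +
          (μ * (‖x t - r t‖ + ν)) • mv B (sgn (mv K₂ (x t - pf t)))) t) :
    (∀ t : ℝ, 0 ≤ t →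
      (x t - pf t) ⬝ᵥ P₂.mulVec (x t - pf t) ≤
        ((x 0 - pf 0) ⬝ᵥ P₂.mulVec (x 0 - pf 0)) * Real.exp (-η₂ * t)) ∧
    (∃ C c : ℝ, 0 < c ∧ ∀ t : ℝ, 0 ≤ t → ‖x t - pf t‖ ≤ C * Real.exp (-c * t)) := by
  have hlmin_pos : 0 < lminQ₂ := eig_set_pos hQ₂ hlminQ₂.1
  have hlmax_pos : 0 < lmaxP₂ := eig_set_pos hP₂ hlmaxP₂.1
  have hη_pos : 0 < η₂ := hη₂ ▸ div_pos hlmin_pos hlmax_pos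
  have hPsymm : P₂ᵀ = P₂ := by
    have := hP₂.1.eq; rwa [conjTranspose_eq_transpose_of_trivial] at this
  set e : ℝ → EuclideanSpace ℝ (Fin n) := fun τ => x τ - pf τ with he
  set V : ℝ → ℝ := fun τ => (e τ : Fin n → ℝ) ⬝ᵥ P₂.mulVec (e τ) with hVdef
  have hQlow : ∀ v : EuclideanSpace ℝ (Fin n),
      lminQ₂ * ‖v‖ ^ 2 ≤ (v : Fin n → ℝ) ⬝ᵥ Q₂.mulVec v :=
    fun v => quad_lower hQ₂.1 (fun i => hlminQ₂.2 (eig_mem hQ₂.1 i)) v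
  have hPhigh : ∀ v : EuclideanSpace ℝ (Fin n),
      (v : Fin n → ℝ) ⬝ᵥ P₂.mulVec v ≤ lmaxP₂ * ‖v‖ ^ 2 :=
    fun v => quad_upper hP₂.1 (fun i => hlmaxP₂.2 (eig_mem hP₂.1 i)) v
  set D : ℝ → EuclideanSpace ℝ (Fin n) := fun t =>
    mv (A + B * K₂) (e t) + mv B (f (x t) t - f (r t) t) +
      (μ * (‖x t - r t‖ + ν)) • mv B (sgn (mv K₂ (e t))) with hDdef
  have hVderiv : ∀ t : ℝ, 0 ≤ t →
      HasDerivAt V ((D t : Fin n → ℝ) ⬝ᵥ P₂.mulVec (e t)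
        + (e t : Fin n → ℝ) ⬝ᵥ P₂.mulVec (D t)) t := by
    intro t ht
    have hde : HasDerivAt e (D t) t := hdyn t ht
    let L : EuclideanSpace ℝ (Fin n) →L[ℝ] EuclideanSpace ℝ (Fin n) :=
      LinearMap.toContinuousLinearMap (Matrix.toEuclideanLin P₂)
    have hLe : ∀ v : EuclideanSpace ℝ (Fin n), L v = mv P₂ v := fun v => rfl
    have hL : HasDerivAt (fun τ => mv P₂ (e τ)) (mv P₂ (D t)) t := by
      have := (L.hasFDerivAt (x := e t)).comp_hasDerivAt t hde
      exact this
    have hIP := hde.inner ℝ hL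
    have heq : (fun τ => ⟪e τ, mv P₂ (e τ)⟫) = V := by
      funext τ; rw [inner_eq_dot]; rfl
    rw [heq] at hIP
    have hval : ⟪e t, mv P₂ (D t)⟫ + ⟪D t, mv P₂ (e t)⟫
        = (D t : Fin n → ℝ) ⬝ᵥ P₂.mulVec (e t) + (e t : Fin n → ℝ) ⬝ᵥ P₂.mulVec (D t) := by
      rw [inner_eq_dot, inner_eq_dot]; exact add_comm _ _
    rwa [hval] at hIP
  -- key differential inequality
  have hkey : ∀ t : ℝ, 0 ≤ t →
      (D t : Fin n → ℝ) ⬝ᵥ P₂.mulVec (e t) + (e t : Fin n → ℝ) ⬝ᵥ P₂.mulVec (D t)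
        ≤ -η₂ * V t := by
    intro t ht
    set z : EuclideanSpace ℝ (Fin n) := e t with hz
    set w : EuclideanSpace ℝ (Fin p) := mv K₂ z with hw
    set Δ : EuclideanSpace ℝ (Fin p) := f (x t) t - f (r t) t with hΔ
    set c : ℝ := μ * (‖x t - r t‖ + ν) with hc
    have hμ0 : 0 < μ := lt_of_lt_of_le hγ hμ
    have hc0 : 0 ≤ c := by positivity
    have hsym : ∀ a b : Fin n → ℝ, a ⬝ᵥ P₂.mulVec b = b ⬝ᵥ P₂.mulVec a := by
      intro a b
      rw [dotProduct_mulVec, ← mulVec_transpose, hPsymm, dotProduct_comm]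
    have hBPz : (Bᵀ * P₂) *ᵥ (z : Fin n → ℝ) = -(w : Fin p → ℝ) := by
      have hwz : (w : Fin p → ℝ) = K₂ *ᵥ (z : Fin n → ℝ) := rfl
      rw [hwz, hK₂, neg_mulVec, neg_neg]
    have hPB : ∀ u : Fin p → ℝ,
        (z : Fin n → ℝ) ⬝ᵥ ((P₂ * B) *ᵥ u) = (-(w : Fin p → ℝ)) ⬝ᵥ u := by
      intro u
      rw [dotProduct_mulVec, ← mulVec_transpose, transpose_mul, hPsymm, hBPz]
    have hwz : K₂ *ᵥ (z : Fin n → ℝ) = (w : Fin p → ℝ) := rfl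
    -- decomposition of z ⬝ᵥ P₂ (D t)
    have hsplit : (z : Fin n → ℝ) ⬝ᵥ P₂.mulVec (D t)
        = (z ⬝ᵥ ((P₂ * A) *ᵥ (z : Fin n → ℝ)) + (-(w : Fin p → ℝ)) ⬝ᵥ w)
          + (-(w : Fin p → ℝ)) ⬝ᵥ Δ + c * ((-(w : Fin p → ℝ)) ⬝ᵥ (sgn w : Fin p → ℝ)) := by
      have h0 : P₂.mulVec (D t) = P₂ *ᵥ ((A + B * K₂) *ᵥ (z : Fin n → ℝ))
          + P₂ *ᵥ (B *ᵥ (Δ : Fin p → ℝ)) + c • (P₂ *ᵥ (B *ᵥ (sgn w : Fin p → ℝ))) := by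
        rw [show (D t : Fin n → ℝ) = (A + B * K₂) *ᵥ (z : Fin n → ℝ) + B *ᵥ (Δ : Fin p → ℝ)
            + c • (B *ᵥ (sgn w : Fin p → ℝ)) from rfl, mulVec_add, mulVec_add, mulVec_smul]
      rw [h0, dotProduct_add, dotProduct_add, dotProduct_smul, smul_eq_mul]
      congr 1
      · congr 1
        · rw [add_mulVec, mulVec_add, dotProduct_add]
          congr 1
          · rw [Matrix.mulVec_mulVec]
          · rw [Matrix.mulVec_mulVec, ← Matrix.mul_assoc, ← Matrix.mulVec_mulVec,
              hwz, hPB]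
        · rw [Matrix.mulVec_mulVec, hPB]
      · rw [Matrix.mulVec_mulVec, hPB]
    -- symmetrized first term
    have htr : (z : Fin n → ℝ) ⬝ᵥ ((P₂ * A)ᵀ *ᵥ (z : Fin n → ℝ))
        = z ⬝ᵥ ((P₂ * A) *ᵥ (z : Fin n → ℝ)) := by
      rw [mulVec_transpose, dotProduct_comm, ← dotProduct_mulVec]
    have hsum : P₂ * A + Aᵀ * P₂ = P₂ * B * Bᵀ * P₂ - Q₂ := by
      rw [← sub_eq_zero]
      calc P₂ * A + Aᵀ * P₂ - (P₂ * B * Bᵀ * P₂ - Q₂)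
          = P₂ * A + Aᵀ * P₂ - P₂ * B * Bᵀ * P₂ + Q₂ := by abel
        _ = 0 := hARE₂
    have hww : (w : Fin p → ℝ) ⬝ᵥ w = ‖w‖ ^ 2 := (norm_sq_eq_dot w).symm
    have hT1 : 2 * ((z : Fin n → ℝ) ⬝ᵥ ((P₂ * A) *ᵥ (z : Fin n → ℝ)))
        = ‖w‖ ^ 2 - (z : Fin n → ℝ) ⬝ᵥ (Q₂ *ᵥ (z : Fin n → ℝ)) := by
      have h2 : 2 * ((z : Fin n → ℝ) ⬝ᵥ ((P₂ * A) *ᵥ (z : Fin n → ℝ)))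
          = z ⬝ᵥ ((P₂ * A + Aᵀ * P₂) *ᵥ (z : Fin n → ℝ)) := by
        rw [add_mulVec, dotProduct_add, ← htr, transpose_mul, hPsymm]
        ring
      rw [h2, hsum, sub_mulVec, dotProduct_sub]
      congr 1
      have hBB : (P₂ * B * Bᵀ * P₂) *ᵥ (z : Fin n → ℝ)
          = (P₂ * B) *ᵥ ((Bᵀ * P₂) *ᵥ (z : Fin n → ℝ)) := by
        rw [Matrix.mulVec_mulVec, ← Matrix.mul_assoc]
      rw [hBB, hBPz, hPB, neg_dotProduct, dotProduct_neg, neg_neg, hww]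
    have hwsgn : (w : Fin p → ℝ) ⬝ᵥ (sgn w : Fin p → ℝ) = ‖w‖ := by
      have hs : (sgn w : Fin p → ℝ) = ‖w‖⁻¹ • (w : Fin p → ℝ) := rfl
      rw [hs, dotProduct_smul, smul_eq_mul, ← norm_sq_eq_dot]
      rcases eq_or_ne (‖w‖) 0 with h0 | h0
      · rw [h0]; ring
      · field_simp
    have hwΔ : |(w : Fin p → ℝ) ⬝ᵥ Δ| ≤ ‖w‖ * ‖Δ‖ := by
      rw [← inner_eq_dot]
      exact abs_real_inner_le_norm w Δ
    have hΔb : ‖Δ‖ ≤ γ * ‖x t - r t‖ := hf (x t) (r t) t ht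
    have hw0 : 0 ≤ ‖w‖ := norm_nonneg _
    have hxr0 : 0 ≤ ‖x t - r t‖ := norm_nonneg _
    have hQz := hQlow z
    have hPz := hPhigh z
    have hηl : η₂ * lmaxP₂ = lminQ₂ := by
      rw [hη₂]; field_simp
    have hDP : (D t : Fin n → ℝ) ⬝ᵥ P₂.mulVec (z : Fin n → ℝ)
        = (z : Fin n → ℝ) ⬝ᵥ P₂.mulVec (D t) := hsym _ _
    have hVt : V t = (z : Fin n → ℝ) ⬝ᵥ P₂.mulVec z := rfl
    rw [hDP, hVt]
    have habs := abs_le.mp hwΔ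
    have hfinal : 2 * ((z : Fin n → ℝ) ⬝ᵥ P₂.mulVec (D t))
        = - ((z : Fin n → ℝ) ⬝ᵥ (Q₂ *ᵥ (z : Fin n → ℝ))) - ‖w‖ ^ 2
          - 2 * ((w : Fin p → ℝ) ⬝ᵥ Δ) - 2 * c * ‖w‖ := by
      rw [hsplit, neg_dotProduct, neg_dotProduct, neg_dotProduct, hwsgn, hww]
      linarith [hT1]
    have hb2 : ‖w‖ * ‖Δ‖ ≤ ‖w‖ * (γ * ‖x t - r t‖) :=
      mul_le_mul_of_nonneg_left hΔb hw0
    have hb3 : ‖w‖ * (γ * ‖x t - r t‖) ≤ c * ‖w‖ := by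
      have hγc : γ * ‖x t - r t‖ ≤ c := by nlinarith
      calc ‖w‖ * (γ * ‖x t - r t‖) ≤ ‖w‖ * c := mul_le_mul_of_nonneg_left hγc hw0
        _ = c * ‖w‖ := mul_comm _ _
    have hQP : η₂ * ((z : Fin n → ℝ) ⬝ᵥ P₂.mulVec z)
        ≤ (z : Fin n → ℝ) ⬝ᵥ (Q₂ *ᵥ (z : Fin n → ℝ)) := by
      calc η₂ * ((z : Fin n → ℝ) ⬝ᵥ P₂.mulVec z) ≤ η₂ * (lmaxP₂ * ‖z‖ ^ 2) :=
            mul_le_mul_of_nonneg_left hPz hη_pos.le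
        _ = lminQ₂ * ‖z‖ ^ 2 := by rw [← mul_assoc, hηl]
        _ ≤ _ := hQz
    nlinarith [hfinal, habs.1, hb2, hb3, hQP, sq_nonneg ‖w‖]
  -- Gronwall argument: W = V * exp(η₂ t) is antitone on [0, ∞)
  have hmain : ∀ t : ℝ, 0 ≤ t → V t ≤ V 0 * Real.exp (-η₂ * t) := by
    intro t ht
    set W : ℝ → ℝ := fun τ => V τ * Real.exp (η₂ * τ) with hW
    have hWd : ∀ τ, 0 ≤ τ → HasDerivAt W
        (((D τ : Fin n → ℝ) ⬝ᵥ P₂.mulVec (e τ) + (e τ : Fin n → ℝ) ⬝ᵥ P₂.mulVec (D τ))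
            * Real.exp (η₂ * τ)
          + V τ * (Real.exp (η₂ * τ) * η₂)) τ := by
      intro τ hτ
      have hexp : HasDerivAt (fun τ => Real.exp (η₂ * τ)) (Real.exp (η₂ * τ) * η₂) τ := by
        simpa using ((hasDerivAt_id τ).const_mul η₂).exp
      exact (hVderiv τ hτ).mul hexp
    have hanti : AntitoneOn W (Set.Ici (0:ℝ)) := by
      apply antitoneOn_of_deriv_nonpos (convex_Ici 0)
      · intro τ hτ
        exact ((hWd τ hτ).continuousAt).continuousWithinAt
      · intro τ hτ
        rw [interior_Ici] at hτ
        exact ((hWd τ (le_of_lt hτ)).differentiableAt).differentiableWithinAt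
      · intro τ hτ
        rw [interior_Ici] at hτ
        rw [(hWd τ (le_of_lt hτ)).deriv]
        have hk := hkey τ (le_of_lt hτ)
        have hexp := Real.exp_pos (η₂ * τ)
        nlinarith
    have hWle : W t ≤ W 0 := hanti Set.self_mem_Ici ht ht
    have hW0 : W 0 = V 0 := by simp [hW]
    have hexp : (0:ℝ) < Real.exp (η₂ * t) := Real.exp_pos _
    have : V t * Real.exp (η₂ * t) ≤ V 0 := by rw [← hW0]; exact hWle
    calc V t = (V t * Real.exp (η₂ * t)) * Real.exp (-η₂ * t) := by
          rw [mul_assoc, ← Real.exp_add]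
          norm_num
      _ ≤ V 0 * Real.exp (-η₂ * t) :=
          mul_le_mul_of_nonneg_right this (Real.exp_pos _).le
  constructor
  · intro t ht
    exact hmain t ht
  · -- exponential decay of the norm
    have hne : Nonempty (Fin n) := by
      obtain ⟨v, hv, -⟩ := hlminQ₂.1
      by_contra h
      exact hv (funext fun i => absurd ⟨i⟩ h)
    have hnefin : (Finset.univ : Finset (Fin n)).Nonempty := Finset.univ_nonempty
    set cP : ℝ := Finset.univ.inf' hnefin hP₂.1.eigenvalues with hcP
    have hcP_le : ∀ i, cP ≤ hP₂.1.eigenvalues i :=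
      fun i => Finset.inf'_le _ (Finset.mem_univ i)
    have hcP_pos : 0 < cP := by
      obtain ⟨i, -, hi⟩ := Finset.exists_mem_eq_inf' hnefin hP₂.1.eigenvalues
      rw [hcP, hi]
      exact hP₂.eigenvalues_pos i
    have hPlow : ∀ v : EuclideanSpace ℝ (Fin n),
        cP * ‖v‖ ^ 2 ≤ (v : Fin n → ℝ) ⬝ᵥ P₂.mulVec v :=
      fun v => quad_lower hP₂.1 hcP_le v
    have hV0 : 0 ≤ V 0 := le_trans (by positivity) (hPlow (e 0))
    refine ⟨Real.sqrt (V 0 / cP), η₂ / 2, by positivity, ?_⟩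
    intro t ht
    have h1 : cP * ‖e t‖ ^ 2 ≤ V t := hPlow (e t)
    have h2 : V t ≤ V 0 * Real.exp (-η₂ * t) := hmain t ht
    have h3 : ‖e t‖ ^ 2 ≤ (V 0 / cP) * Real.exp (-η₂ * t) := by
      rw [div_mul_eq_mul_div, le_div_iff₀ hcP_pos]
      nlinarith
    have hCe : (Real.sqrt (V 0 / cP) * Real.exp (-(η₂ / 2) * t)) ^ 2
        = (V 0 / cP) * Real.exp (-η₂ * t) := by
      rw [mul_pow, Real.sq_sqrt (div_nonneg hV0 hcP_pos.le), pow_two, ← Real.exp_add]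
      congr 1
      ring
    have h4 : ‖e t‖ ^ 2 ≤ (Real.sqrt (V 0 / cP) * Real.exp (-(η₂ / 2) * t)) ^ 2 := by
      rw [hCe]; exact h3
    have h5 : ‖e t‖ ≤ Real.sqrt (V 0 / cP) * Real.exp (-(η₂ / 2) * t) := by
      have hnn : 0 ≤ Real.sqrt (V 0 / cP) * Real.exp (-(η₂ / 2) * t) := by positivity
      nlinarith [norm_nonneg (e t)]
    exact h5
end
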